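/- Let e be a unit vector in a Hilbert space H and M ≥ m > 0. If f : [a,b] → H is Bochner integrable and Re⟨M e − f(t), f(t) − m e⟩ ≥ 0 for a.e. t ∈ [a,b], then (2√(mM)/(M+m)) · ∫ₐᵇ ‖f(t)‖ dt ≤ ‖∫ₐᵇ f(t) dt‖. -/

import Mathlib

open MeasureTheory

theorem stmt_4 {𝕜 H : Type*} [RCLike 𝕜] [NormedAddCommGroup H] [InnerProductSpace 𝕜 H]
    [NormedSpace ℝ H] [IsScalarTower ℝ 𝕜 H] [CompleteSpace H]
    {a b : ℝ} {f : ℝ → H} (hf : IntegrableOn f (Set.Icc a b))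
    {m M : ℝ} (hm : 0 < m) (hmM : m ≤ M) {e : H} (he : ‖e‖ = 1)
    (h : ∀ᵐ t ∂(volume.restrict (Set.Icc a b)),
      0 ≤ RCLike.re (inner 𝕜 ((M : 𝕜) • e - f t) (f t - (m : 𝕜) • e) : 𝕜)) :
    (2 * Real.sqrt (m * M) / (M + m)) * ∫ t in Set.Icc a b, ‖f t‖ ≤
      ‖∫ t in Set.Icc a b, f t‖ := by
  have hM : 0 < M := lt_of_lt_of_le hm hmM
  have hmM0 : (0:ℝ) ≤ m * M := by positivity
  have hsq : Real.sqrt (m * M) ^ 2 = m * M := Real.sq_sqrt hmM0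
  set μ := volume.restrict (Set.Icc a b) with hμ
  have hfi : Integrable f μ := hf
  have hint1 : Integrable (fun t => 2 * Real.sqrt (m * M) * ‖f t‖) μ :=
    (hfi.norm.const_mul _)
  have hint2 : Integrable (fun t => (M + m) * RCLike.re (inner 𝕜 e (f t) : 𝕜)) μ :=
    ((hfi.const_inner e).re.const_mul _)
  have key : ∀ᵐ t ∂μ, 2 * Real.sqrt (m * M) * ‖f t‖ ≤
      (M + m) * RCLike.re (inner 𝕜 e (f t) : 𝕜) := by
    filter_upwards [h] with t ht
    have expand : RCLike.re (inner 𝕜 ((M : 𝕜) • e - f t) (f t - (m : 𝕜) • e) : 𝕜)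
        = (M + m) * RCLike.re (inner 𝕜 e (f t) : 𝕜) - ‖f t‖ ^ 2 - m * M := by
      have h1 : RCLike.re (inner 𝕜 (f t) e : 𝕜) = RCLike.re (inner 𝕜 e (f t) : 𝕜) :=
        inner_re_symm _ _
      have h2 : RCLike.re (inner 𝕜 e e : 𝕜) = 1 := by
        rw [inner_self_eq_norm_sq, he]; norm_num
      have h3 : RCLike.re (inner 𝕜 (f t) (f t) : 𝕜) = ‖f t‖ ^ 2 := by
        rw [inner_self_eq_norm_sq]
      simp only [inner_sub_left, inner_sub_right, inner_smul_left, inner_smul_right,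
        map_sub, map_add, map_mul, RCLike.conj_ofReal, RCLike.ofReal_re, RCLike.ofReal_im,
        RCLike.mul_re]
      simp only [zero_mul, mul_zero, sub_zero]
      nlinarith [h1, h2, h3]
    have hAM : 2 * Real.sqrt (m * M) * ‖f t‖ ≤ ‖f t‖ ^ 2 + m * M := by
      nlinarith [sq_nonneg (‖f t‖ - Real.sqrt (m * M))]
    rw [expand] at ht
    linarith
  have step : 2 * Real.sqrt (m * M) * ∫ t in Set.Icc a b, ‖f t‖ ≤
      (M + m) * RCLike.re (inner 𝕜 e (∫ t in Set.Icc a b, f t) : 𝕜) := by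
    have := integral_mono_ae hint1 hint2 key
    rw [integral_const_mul, integral_const_mul] at this
    have heq : ∫ t, RCLike.re (inner 𝕜 e (f t) : 𝕜) ∂μ
        = RCLike.re (inner 𝕜 e (∫ t, f t ∂μ) : 𝕜) := by
      rw [integral_re (hfi.const_inner e), integral_inner hfi]
    rw [heq] at this
    exact this
  have hcs : RCLike.re (inner 𝕜 e (∫ t in Set.Icc a b, f t) : 𝕜) ≤
      ‖∫ t in Set.Icc a b, f t‖ := by
    calc RCLike.re (inner 𝕜 e (∫ t in Set.Icc a b, f t) : 𝕜)
        ≤ ‖e‖ * ‖∫ t in Set.Icc a b, f t‖ := re_inner_le_norm _ _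
      _ = ‖∫ t in Set.Icc a b, f t‖ := by rw [he, one_mul]
  rw [div_mul_eq_mul_div, div_le_iff₀ (by linarith)]
  calc 2 * Real.sqrt (m * M) * ∫ t in Set.Icc a b, ‖f t‖
      ≤ (M + m) * RCLike.re (inner 𝕜 e (∫ t in Set.Icc a b, f t) : 𝕜) := step
    _ ≤ (M + m) * ‖∫ t in Set.Icc a b, f t‖ := by
        apply mul_le_mul_of_nonneg_left hcs (by linarith)
    _ = ‖∫ t in Set.Icc a b, f t‖ * (M + m) := mul_comm _ _
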